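/- Let $R$ be a commutative noetherian local ring. If every acyclic complex of finitely generated projective $R$-modules is totally acyclic, then every finitely generated $R$-module $M$ with $\operatorname{Ext}_R^i(M,R)=0$ for all $i>0$ is totally reflexive. -/

import Mathlib

open CategoryTheory IsLocalRing

noncomputable section

/-- The `i`-th Ext group of `R`-modules `M`, `N`, as a `ModuleCat R`. -/
def ExtGroup (R : Type) [CommRing R] (i : ℕ) (M N : ModuleCat.{0} R) : ModuleCat R :=
  ((Ext R (ModuleCat.{0} R) i).obj (Opposite.op M)).obj N

/-- The `i`-th Tor group. -/
def TorGroup (R : Type) [CommRing R] (i : ℕ) (M N : ModuleCat.{0} R) : ModuleCat R :=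
  ((Tor (ModuleCat.{0} R) i).obj M).obj N

/-- `Ext_R^i(M, N) = 0` for all `i ≫ 0`. -/
def ExtEventuallyZero (R : Type) [CommRing R] (M N : ModuleCat.{0} R) : Prop :=
  ∃ t : ℕ, ∀ i > t, Subsingleton (ExtGroup R i M N)

/-- Property (ee). -/
def PropEE (R : Type) [CommRing R] : Prop :=
  ∀ M N : ModuleCat.{0} R, Module.Finite R M → Module.Finite R N →
    ExtEventuallyZero R M N → ExtEventuallyZero R N M

/-- Gorenstein: `Ext^i(k, R) = 0` for `i ≫ 0`. -/
def IsGorensteinLocalRing (R : Type) [CommRing R] [IsLocalRing R] : Prop :=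
  ∃ t : ℕ, ∀ i > t, Subsingleton
    (ExtGroup R i (ModuleCat.of R (ResidueField R)) (ModuleCat.of R R))

open Classical in
/-- depth of a module over a local ring, with depth of zero module = ⊤. -/
def rdepth (R : Type) [CommRing R] [IsLocalRing R]
    (M : Type) [AddCommGroup M] [Module R M] : ℕ∞ :=
  if Subsingleton M then ⊤ else
    sSup {n : ℕ∞ | ∃ rs : List R, (rs.length : ℕ∞) = n ∧
      (∀ r ∈ rs, r ∈ maximalIdeal R) ∧ RingTheory.Sequence.IsRegular M rs}

/-- Totally reflexive module. -/
def IsTotallyReflexive (R : Type) [CommRing R]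
    (M : Type) [AddCommGroup M] [Module R M] : Prop :=
  Module.Finite R M ∧ Function.Bijective (Module.Dual.eval R M) ∧
  (∀ i > 0, Subsingleton (ExtGroup R i (ModuleCat.of R M) (ModuleCat.of R R))) ∧
  (∀ i > 0, Subsingleton
    (ExtGroup R i (ModuleCat.of R (Module.Dual R M)) (ModuleCat.of R R)))

/-- Property (tr). -/
def PropTR (R : Type) [CommRing R] : Prop :=
  ∀ (M : Type) [AddCommGroup M] [Module R M], Module.Finite R M →
    (∀ i > 0, Subsingleton (ExtGroup R i (ModuleCat.of R M) (ModuleCat.of R R))) →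
    IsTotallyReflexive R M

/-- Property (dep): the depth formula (written additively to avoid truncated subtraction). -/
def PropDep (R : Type) [CommRing R] [IsLocalRing R] : Prop :=
  ∀ (M N : Type) [AddCommGroup M] [Module R M] [AddCommGroup N] [Module R N],
    Module.Finite R M → Module.Finite R N → Nontrivial M → Nontrivial N →
    (∀ i > 0, Subsingleton (TorGroup R i (ModuleCat.of R M) (ModuleCat.of R N))) →
    rdepth R (TensorProduct R M N) + rdepth R R = rdepth R M + rdepth R N

/-- AB ring. -/
def IsABRing (R : Type) [CommRing R] [IsLocalRing R] : Prop :=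
  IsGorensteinLocalRing R ∧ ∃ n : ℕ, ∀ M N : ModuleCat.{0} R,
    Module.Finite R M → Module.Finite R N → ExtEventuallyZero R M N →
    ∀ i > n, Subsingleton (ExtGroup R i M N)

/-- A complex of finitely generated projective modules, indexed by `ℤ`. -/
structure FGProjComplex (R : Type) [CommRing R] where
  X : ℤ → Type
  [acg : ∀ n, AddCommGroup (X n)]
  [mod : ∀ n, Module R (X n)]
  [fin : ∀ n, Module.Finite R (X n)]
  [proj : ∀ n, Module.Projective R (X n)]
  d : ∀ n : ℤ, X n →ₗ[R] X (n + 1)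
  dd : ∀ n : ℤ, (d (n + 1)).comp (d n) = 0

attribute [instance] FGProjComplex.acg FGProjComplex.mod FGProjComplex.fin FGProjComplex.proj

/-- Acyclicity of such a complex. -/
def FGProjComplex.Acyclic {R : Type} [CommRing R] (C : FGProjComplex R) : Prop :=
  ∀ n : ℤ, LinearMap.ker (C.d (n + 1)) = LinearMap.range (C.d n)

/-- The dual complex is acyclic. -/
def FGProjComplex.DualAcyclic {R : Type} [CommRing R] (C : FGProjComplex R) : Prop :=
  ∀ n : ℤ, LinearMap.ker ((C.d n).dualMap) = LinearMap.range ((C.d (n + 1)).dualMap)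

/-- Property (tac): every acyclic complex of f.g. projective modules is totally acyclic. -/
def PropTAC (R : Type) [CommRing R] : Prop :=
  ∀ C : FGProjComplex R, C.Acyclic → C.DualAcyclic

/-- `M` is an ∞-syzygy. -/
def IsInfiniteSyzygy (R : Type) [CommRing R]
    (M : Type) [AddCommGroup M] [Module R M] : Prop :=
  Module.Finite R M ∧
  ∃ (k : ℕ → ℕ) (f : M →ₗ[R] (Fin (k 0) → R))
    (d : ∀ n : ℕ, (Fin (k n) → R) →ₗ[R] (Fin (k (n + 1)) → R)),
    Function.Injective f ∧ LinearMap.ker (d 0) = LinearMap.range f ∧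
    ∀ n : ℕ, LinearMap.ker (d (n + 1)) = LinearMap.range (d n)

end

noncomputable section

/-- Minimal `n`-th syzygy: `IsMinimalSyzygy R n M K` says `K` is the `n`-th syzygy of `M`
computed from a minimal free resolution. -/
def IsMinimalSyzygy (R : Type) [CommRing R] [IsLocalRing R] :
    ℕ → ModuleCat.{0} R → ModuleCat.{0} R → Prop
  | 0, M, K => Nonempty (K ≃ₗ[R] M)
  | n + 1, M, K => ∃ (m : ℕ) (f : (Fin m → R) →ₗ[R] M),
      Function.Surjective f ∧
      (LinearMap.ker f ≤ (maximalIdeal R) • (⊤ : Submodule R (Fin m → R))) ∧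
      IsMinimalSyzygy R n (ModuleCat.of R (LinearMap.ker f)) K

/-- A resolving class of modules: contains `R`, closed under isomorphisms, direct summands,
extensions and syzygies. -/
def IsResolvingClass (R : Type) [CommRing R] (P : ModuleCat.{0} R → Prop) : Prop :=
  (P (ModuleCat.of R R)) ∧
  (∀ X Y : ModuleCat.{0} R, Nonempty (X ≃ₗ[R] Y) → P X → P Y) ∧
  (∀ (X Y : ModuleCat.{0} R) (i : X →ₗ[R] Y) (r : Y →ₗ[R] X),
      r.comp i = LinearMap.id → P Y → P X) ∧
  (∀ (X Y Z : ModuleCat.{0} R) (f : X →ₗ[R] Y) (g : Y →ₗ[R] Z),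
      Function.Injective f → Function.Surjective g → LinearMap.ker g = LinearMap.range f →
      P X → P Z → P Y) ∧
  (∀ (X Y : ModuleCat.{0} R) (m : ℕ) (f : (Fin m → R) →ₗ[R] X), Function.Surjective f →
      Nonempty (Y ≃ₗ[R] LinearMap.ker f) → P X → P Y)

/-- `N` belongs to the resolving closure `res M`. -/
def InResolvingClosure (R : Type) [CommRing R] (M N : ModuleCat.{0} R) : Prop :=
  ∀ P : ModuleCat.{0} R → Prop, IsResolvingClass R P → P M → P N

/-- `M` has finite G-dimension: it admits a finite resolution by totally reflexive modules. -/
def HasFiniteGDim (R : Type) [CommRing R] (M : Type) [AddCommGroup M] [Module R M] : Prop :=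
  ∃ (n : ℕ) (T : ℕ → ModuleCat.{0} R) (d : ∀ i : ℕ, T (i + 1) →ₗ[R] T i) (ε : T 0 →ₗ[R] M),
    (∀ i, IsTotallyReflexive R (T i)) ∧ Function.Surjective ε ∧
    LinearMap.ker ε = LinearMap.range (d 0) ∧
    (∀ i, LinearMap.ker (d i) = LinearMap.range (d (i + 1))) ∧
    (∀ i > n, Subsingleton (T i))

/-- `ω` is a canonical module of the `d`-dimensional Cohen–Macaulay local ring `R`:
`Ext^i(k, ω)` vanishes for `i ≠ d` and is isomorphic to `k` for `i = d`. -/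
def IsCanonicalModule (R : Type) [CommRing R] [IsLocalRing R] (d : ℕ)
    (ω : ModuleCat.{0} R) : Prop :=
  Module.Finite R ω ∧
  (∀ i : ℕ, i ≠ d → Subsingleton (ExtGroup R i (ModuleCat.of R (ResidueField R)) ω)) ∧
  Nonempty ((ExtGroup R d (ModuleCat.of R (ResidueField R)) ω) ≃ₗ[R] (ResidueField R))

/-- Cohen–Macaulay local ring: depth equals Krull dimension. -/
def IsCohenMacaulayLocalRing (R : Type) [CommRing R] [IsLocalRing R] : Prop :=
  (rdepth R R : WithBot ℕ∞) = ringKrullDim R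

end


/-! ### Auxiliary material for the proof -/

namespace Stmt10Aux

open CategoryTheory LinearMap Function

open LinearMap Function

variable {R : Type} [CommRing R]

theorem exists_comp {A B C : Type} [AddCommGroup A] [Module R A] [AddCommGroup B] [Module R B]
    [AddCommGroup C] [Module R C] (g : A →ₗ[R] B) (f : A →ₗ[R] C)
    (hg : Surjective g) (h : ker g ≤ ker f) : ∃ h' : B →ₗ[R] C, h' ∘ₗ g = f := by
  have hinj : Injective ((ker g).liftQ g le_rfl) := by
    rw [← LinearMap.ker_eq_bot]
    exact Submodule.ker_liftQ_eq_bot _ _ _ le_rfl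
  have hsurj : Surjective ((ker g).liftQ g le_rfl) := by
    intro b; obtain ⟨a, rfl⟩ := hg b
    exact ⟨Submodule.Quotient.mk a, Submodule.liftQ_apply (ker g) g a⟩
  let e := LinearEquiv.ofBijective ((ker g).liftQ g le_rfl) ⟨hinj, hsurj⟩
  refine ⟨(ker g).liftQ f h ∘ₗ (e.symm : B →ₗ[R] A ⧸ ker g), ?_⟩
  ext a
  show ((ker g).liftQ f h) (e.symm (g a)) = f a
  have : e.symm (g a) = Submodule.Quotient.mk a := by
    rw [LinearEquiv.symm_apply_eq]
    exact (Submodule.liftQ_apply (h := le_rfl) (ker g) g a).symm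
  rw [this, Submodule.liftQ_apply]

theorem dualMap_inj {A B : Type} [AddCommGroup A] [Module R A] [AddCommGroup B] [Module R B]
    (g : A →ₗ[R] B) (hg : Surjective g) : Injective g.dualMap := by
  intro φ ψ hh
  ext b
  obtain ⟨a, rfl⟩ := hg b
  exact DFunLike.congr_fun hh a

theorem ker_dualMap_eq_range_dualMap {A B C : Type} [AddCommGroup A] [Module R A]
    [AddCommGroup B] [Module R B] [AddCommGroup C] [Module R C]
    (f : A →ₗ[R] B) (g : B →ₗ[R] C) (hg : Surjective g) (h : ker g = range f) :
    ker f.dualMap = range g.dualMap := by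
  ext φ
  constructor
  · intro hφ
    have hle : ker g ≤ ker φ := by
      rw [h]; rintro b ⟨a, rfl⟩
      exact DFunLike.congr_fun hφ a
    obtain ⟨ψ, hψ⟩ := exists_comp g φ hg hle
    exact ⟨ψ, hψ⟩
  · rintro ⟨ψ, rfl⟩
    ext a
    show ψ (g (f a)) = 0
    have : f a ∈ ker g := h ▸ mem_range_self f a
    rw [this]; simp

theorem eval_naturality {A B : Type} [AddCommGroup A] [Module R A] [AddCommGroup B] [Module R B]
    (f : A →ₗ[R] B) (x : A) :
    f.dualMap.dualMap (Module.Dual.eval R A x) = Module.Dual.eval R B (f x) := rfl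

open LinearMap Function

variable {R : Type} [CommRing R] [IsNoetherianRing R]

/-- step: from a pair (k, S ⊆ R^k) with S fg, produce next free cover of S. -/
noncomputable def resNext (p : Σ k : ℕ, Submodule R (Fin k → R)) :
    Σ k' : ℕ, {f : (Fin k' → R) →ₗ[R] (Fin p.1 → R) // LinearMap.range f = p.2} := by
  have : Module.Finite R p.2 := by
    have : IsNoetherian R (Fin p.1 → R) := inferInstance
    exact Module.Finite.iff_fg.mpr (IsNoetherian.noetherian p.2)
  have h := Module.Finite.exists_fin' R p.2
  refine ⟨h.choose, p.2.subtype ∘ₗ h.choose_spec.choose, ?_⟩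
  rw [LinearMap.range_comp, LinearMap.range_eq_top.mpr h.choose_spec.choose_spec,
    Submodule.map_top, Submodule.range_subtype]

noncomputable def resState (k0 : ℕ) (S0 : Submodule R (Fin k0 → R)) :
    ℕ → Σ k : ℕ, Submodule R (Fin k → R)
  | 0 => ⟨k0, S0⟩
  | n + 1 => ⟨(resNext (resState k0 S0 n)).1, LinearMap.ker (resNext (resState k0 S0 n)).2.1⟩

theorem exists_free_resolution (M : Type*) [AddCommGroup M] [Module R M]
    [Module.Finite R M] :
    ∃ (k : ℕ → ℕ) (d : ∀ n, (Fin (k (n+1)) → R) →ₗ[R] (Fin (k n) → R))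
      (ε : (Fin (k 0) → R) →ₗ[R] M),
      Function.Surjective ε ∧ LinearMap.ker ε = LinearMap.range (d 0) ∧
      ∀ n, LinearMap.ker (d n) = LinearMap.range (d (n+1)) := by
  obtain ⟨k0, ε, hε⟩ := Module.Finite.exists_fin' R M
  set st := resState k0 (LinearMap.ker ε) with hst
  refine ⟨fun n => (st n).1, fun n => (resNext (st n)).2.1, ε, hε, ?_, ?_⟩
  · have : (st 0).2 = LinearMap.ker ε := rfl
    exact ((resNext (st 0)).2.2.trans this).symm
  · intro n
    have h1 : LinearMap.ker (resNext (st n)).2.1 = (st (n+1)).2 := rfl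
    exact h1.trans (resNext (st (n+1))).2.2.symm

open CategoryTheory LinearMap Function

noncomputable section

variable (R : Type) [CommRing R]

theorem rk_helper {A B C' : Type} [AddCommGroup A] [Module R A] [AddCommGroup B] [Module R B]
    [AddCommGroup C'] [Module R C'] {f f' : A →ₗ[R] B} {g g' : B →ₗ[R] C'}
    (hf : f = f') (hg : g = g') (h : range f' = ker g') : range f = ker g := by
  subst hf; subst hg; exact h

theorem rk_transport {A B C' A' B' C'' : Type} [AddCommGroup A] [Module R A]
    [AddCommGroup B] [Module R B] [AddCommGroup C'] [Module R C'] [AddCommGroup A'] [Module R A']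
    [AddCommGroup B'] [Module R B'] [AddCommGroup C''] [Module R C'']
    (f : A →ₗ[R] B) (g : B →ₗ[R] C') (f' : A' →ₗ[R] B') (g' : B' →ₗ[R] C'')
    (eA : A ≃ₗ[R] A') (eB : B ≃ₗ[R] B') (eC : C' ≃ₗ[R] C'')
    (hf : ∀ a, eB (f a) = f' (eA a)) (hg : ∀ b, eC (g b) = g' (eB b)) :
    (range f = ker g) ↔ (range f' = ker g') := by
  have r : ∀ b, b ∈ range f ↔ eB b ∈ range f' := by
    intro b; constructor
    · rintro ⟨a, rfl⟩; exact ⟨eA a, (hf a).symm⟩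
    · rintro ⟨a', ha'⟩
      refine ⟨eA.symm a', eB.injective ?_⟩
      rw [hf, LinearEquiv.apply_symm_apply, ha']
  have k : ∀ b, b ∈ ker g ↔ eB b ∈ ker g' := by
    intro b; simp only [mem_ker]; rw [← hg, LinearEquiv.map_eq_zero_iff]
  constructor
  · intro h; ext y; rw [← eB.apply_symm_apply y, ← r, ← k, h]
  · intro h; ext b; rw [r, k, h]

def homE (k : ℕ → ℕ) (n : ℕ) :
    (ModuleCat.of R (Fin (k n) → R) ⟶ ModuleCat.of R R) ≃ₗ[R] Module.Dual R (Fin (k n) → R) :=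
  ModuleCat.homLinearEquiv

variable (M : Type) [AddCommGroup M] [Module R M]
  (k : ℕ → ℕ) (d : ∀ n, (Fin (k (n+1)) → R) →ₗ[R] (Fin (k n) → R))
  (ε : (Fin (k 0) → R) →ₗ[R] M)
  (hε : Surjective ε) (h0 : ker ε = range (d 0))
  (hd : ∀ n, ker (d n) = range (d (n+1)))

def resCx : ChainComplex (ModuleCat.{0} R) ℕ :=
  ChainComplex.of (fun n => ModuleCat.of R (Fin (k n) → R))
    (fun n => ModuleCat.ofHom (d n))
    (fun n => by
      refine ModuleCat.hom_ext (LinearMap.ext fun x => ?_)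
      show d n (d (n+1) x) = 0
      have : d (n+1) x ∈ ker (d n) := (hd n).symm ▸ mem_range_self (d (n+1)) x
      exact this)

def resPR : ProjectiveResolution (ModuleCat.of R M) where
  complex := resCx R k d hd
  projective n := by
    apply (IsProjective.iff_projective (R := R) (P := Fin (k n) → R)).mp
    infer_instance
  π := (ChainComplex.toSingle₀Equiv _ _).symm ⟨ModuleCat.ofHom ε, by
    rw [show (resCx R k d hd).d 1 0 = ModuleCat.ofHom (d 0) from ChainComplex.of_d (fun n => ModuleCat.of R (Fin (k n) → R)) (fun n => ModuleCat.ofHom (d n)) 0]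
    refine ModuleCat.hom_ext (LinearMap.ext fun x => ?_)
    show ε (d 0 x) = 0
    have : d 0 x ∈ ker ε := h0 ▸ mem_range_self (d 0) x
    exact this⟩
  quasiIso := ⟨fun n => by
    cases n with
    | zero =>
      rw [ChainComplex.quasiIsoAt₀_iff, ShortComplex.quasiIso_iff_of_zeros']
      · constructor
        · rw [ShortComplex.moduleCat_exact_iff_range_eq_ker]
          simp only [HomologicalComplex.shortComplexFunctor'_obj_f,
            HomologicalComplex.shortComplexFunctor'_map_τ₂,
            ChainComplex.toSingle₀Equiv_symm_apply_f_zero]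
          exact rk_helper R (congrArg ModuleCat.Hom.hom (ChainComplex.of_d (fun n => ModuleCat.of R (Fin (k n) → R)) (fun n => ModuleCat.ofHom (d n)) 0)) rfl h0.symm
        · rw [ModuleCat.epi_iff_surjective]
          simp only [HomologicalComplex.shortComplexFunctor'_map_τ₂,
            ChainComplex.toSingle₀Equiv_symm_apply_f_zero]
          exact hε
      all_goals rfl
    | succ n =>
      rw [quasiIsoAt_iff_exactAt']
      · rw [HomologicalComplex.exactAt_iff' _ (n+1+1) (n+1) n (by simp) (by simp)]
        rw [ShortComplex.moduleCat_exact_iff_range_eq_ker]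
        simp only [HomologicalComplex.sc', HomologicalComplex.shortComplexFunctor'_obj_f,
          HomologicalComplex.shortComplexFunctor'_obj_g]
        exact rk_helper R (congrArg ModuleCat.Hom.hom (ChainComplex.of_d (fun n => ModuleCat.of R (Fin (k n) → R)) (fun n => ModuleCat.ofHom (d n)) (n+1)))
          (congrArg ModuleCat.Hom.hom (ChainComplex.of_d (fun n => ModuleCat.of R (Fin (k n) → R)) (fun n => ModuleCat.ofHom (d n)) n)) (hd n).symm
      · apply ChainComplex.exactAt_succ_single_obj⟩

theorem rk_congr {A B C' : Type} [AddCommGroup A] [Module R A] [AddCommGroup B] [Module R B]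
    [AddCommGroup C'] [Module R C'] {f f' : A →ₗ[R] B} {g g' : B →ₗ[R] C'}
    (hf : f = f') (hg : g = g') : (range f = ker g) ↔ (range f' = ker g') := by
  subst hf; subst hg; exact Iff.rfl

theorem moduleCat_subsingleton_iff_isZero (X : ModuleCat.{0} R) :
    Subsingleton X ↔ Limits.IsZero X := by
  constructor
  · intro h; exact ModuleCat.isZero_of_subsingleton X
  · intro h
    have hz : (𝟙 X : X ⟶ X) = 0 := h.eq_of_src _ _
    refine ⟨fun a b => ?_⟩
    have ha : a = (0 : X ⟶ X) a := by rw [← hz]; rfl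
    have hb : b = (0 : X ⟶ X) b := by rw [← hz]; rfl
    rw [ha, hb]
    show (0 : X →ₗ[R] X) a = (0 : X →ₗ[R] X) b
    simp

include hd in
theorem dcx_eq (j : ℕ) :
    ((resCx R k d hd).linearYonedaObj R (ModuleCat.of R R)).d j (j+1) =
      ModuleCat.ofHom (Linear.leftComp R (ModuleCat.of R R) (ModuleCat.ofHom (d j))) := by
  have e0 : (resCx R k d hd).d (j+1) j = ModuleCat.ofHom (d j) :=
    ChainComplex.of_d (fun n => ModuleCat.of R (Fin (k n) → R)) (fun n => ModuleCat.ofHom (d n)) j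
  exact (ChainComplex.linearYonedaObj_d _ _ _ _ _).trans
    (congrArg (fun x => ModuleCat.ofHom (Linear.leftComp R (ModuleCat.of R R) x)) e0)

include ε hε h0 hd in
theorem ext_vanish_iff (i : ℕ) :
    Subsingleton (((Ext R (ModuleCat.{0} R) (i+1)).obj
        (Opposite.op (ModuleCat.of R M))).obj (ModuleCat.of R R)) ↔
      ker ((d (i+1)).dualMap) = range ((d i).dualMap) := by
  have iso := (resPR R M k d ε hε h0 hd).isoExt (R := R) (i+1) (ModuleCat.of R R)
  rw [moduleCat_subsingleton_iff_isZero]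
  rw [iso.isZero_iff]
  rw [← HomologicalComplex.exactAt_iff_isZero_homology]
  rw [HomologicalComplex.exactAt_iff' _ i (i+1) (i+1+1) (by simp) (by simp)]
  rw [ShortComplex.moduleCat_exact_iff_range_eq_ker]
  have hc : (resPR R M k d ε hε h0 hd).complex = resCx R k d hd := rfl
  rw [hc]
  simp only [HomologicalComplex.sc', HomologicalComplex.shortComplexFunctor'_obj_f,
    HomologicalComplex.shortComplexFunctor'_obj_g]
  refine (rk_transport R _ _ (d i).dualMap (d (i+1)).dualMap (homE R k i) (homE R k (i+1))
    (homE R k (i+1+1)) ?_ ?_).trans eq_comm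
  · intro a; rw [dcx_eq R k d hd i]; rfl
  · intro a; rw [dcx_eq R k d hd (i+1)]; rfl


end

section splice

variable (R : Type) [CommRing R] (M : Type) [AddCommGroup M] [Module R M]
  (kF kG : ℕ → ℕ)
  (dF : ∀ n, (Fin (kF (n+1)) → R) →ₗ[R] (Fin (kF n) → R))
  (dG : ∀ n, (Fin (kG (n+1)) → R) →ₗ[R] (Fin (kG n) → R))
  (εF : (Fin (kF 0) → R) →ₗ[R] M)
  (εG : (Fin (kG 0) → R) →ₗ[R] Module.Dual R M)

def spliceX : ℤ → Type
  | .ofNat i => Module.Dual R (Fin (kF i) → R)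
  | .negSucc j => Fin (kG j) → R

def spliceXacg : ∀ n, AddCommGroup (spliceX R kF kG n)
  | .ofNat i => inferInstanceAs (AddCommGroup (Module.Dual R (Fin (kF i) → R)))
  | .negSucc j => inferInstanceAs (AddCommGroup (Fin (kG j) → R))

attribute [instance] spliceXacg

def spliceXmod : ∀ n, Module R (spliceX R kF kG n)
  | .ofNat i => inferInstanceAs (Module R (Module.Dual R (Fin (kF i) → R)))
  | .negSucc j => inferInstanceAs (Module R (Fin (kG j) → R))

attribute [instance] spliceXmod

def spliceXfin : ∀ n, Module.Finite R (spliceX R kF kG n)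
  | .ofNat i => inferInstanceAs (Module.Finite R (Module.Dual R (Fin (kF i) → R)))
  | .negSucc j => inferInstanceAs (Module.Finite R (Fin (kG j) → R))

def spliceXproj : ∀ n, Module.Projective R (spliceX R kF kG n)
  | .ofNat i => inferInstanceAs (Module.Projective R (Module.Dual R (Fin (kF i) → R)))
  | .negSucc j => inferInstanceAs (Module.Projective R (Fin (kG j) → R))

def spliceD : ∀ n : ℤ, spliceX R kF kG n →ₗ[R] spliceX R kF kG (n+1)
  | .ofNat i => (dF i).dualMap
  | .negSucc 0 => εF.dualMap ∘ₗ εG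
  | .negSucc (j+1) => dG j

end splice

end Stmt10Aux

/-- if every acyclic complex of f.g. projectives is totally acyclic,
then `R` satisfies property (tr). -/
theorem stmt10 (R : Type) [CommRing R] [IsLocalRing R] [IsNoetherianRing R]
    (h : PropTAC R) : PropTR R := by
  classical
  intro M _ _ hM hext
  haveI := hM
  open Stmt10Aux LinearMap Function Module in
  obtain ⟨kF, dF, εF, hεF, h0F, hdF⟩ := Stmt10Aux.exists_free_resolution (R := R) M
  have hNfin : Module.Finite R (Module.Dual R M) := by
    haveI : IsNoetherian R (Module.Dual R (Fin (kF 0) → R)) :=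
      isNoetherian_of_isNoetherianRing_of_finite R _
    haveI := isNoetherian_of_injective εF.dualMap (Stmt10Aux.dualMap_inj εF hεF)
    exact ⟨IsNoetherian.noetherian ⊤⟩
  obtain ⟨kG, dG, εG, hεG, h0G, hdG⟩ :=
    Stmt10Aux.exists_free_resolution (R := R) (Module.Dual R M)
  -- the spliced complex
  set C : FGProjComplex R :=
    { X := Stmt10Aux.spliceX R kF kG
      acg := Stmt10Aux.spliceXacg R kF kG
      mod := Stmt10Aux.spliceXmod R kF kG
      fin := Stmt10Aux.spliceXfin R kF kG
      proj := Stmt10Aux.spliceXproj R kF kG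
      d := Stmt10Aux.spliceD R M kF kG dF dG εF εG
      dd := by
        intro n
        match n with
        | .ofNat i =>
          show (dF (i+1)).dualMap ∘ₗ (dF i).dualMap = 0
          refine LinearMap.ext fun φ => LinearMap.ext fun x => ?_
          show φ (dF i (dF (i+1) x)) = 0
          have hz : dF (i+1) x ∈ LinearMap.ker (dF i) :=
            (hdF i).symm ▸ LinearMap.mem_range_self (dF (i+1)) x
          rw [LinearMap.mem_ker] at hz
          rw [hz, map_zero]
        | .negSucc 0 =>
          show (dF 0).dualMap ∘ₗ (εF.dualMap ∘ₗ εG) = 0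
          refine LinearMap.ext fun g => LinearMap.ext fun x => ?_
          show (εG g) (εF (dF 0 x)) = 0
          have hz : dF 0 x ∈ LinearMap.ker εF :=
            h0F ▸ LinearMap.mem_range_self (dF 0) x
          rw [LinearMap.mem_ker] at hz
          rw [hz, map_zero]
        | .negSucc 1 =>
          show (εF.dualMap ∘ₗ εG) ∘ₗ dG 0 = 0
          refine LinearMap.ext fun x => LinearMap.ext fun y => ?_
          show (εG (dG 0 x)) (εF y) = 0
          have hz : dG 0 x ∈ LinearMap.ker εG :=
            h0G ▸ LinearMap.mem_range_self (dG 0) x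
          rw [LinearMap.mem_ker] at hz
          rw [hz]
          rfl
        | .negSucc (j+2) =>
          show dG j ∘ₗ dG (j+1) = 0
          refine LinearMap.ext fun x => ?_
          show dG j (dG (j+1) x) = 0
          have hz : dG (j+1) x ∈ LinearMap.ker (dG j) :=
            (hdG j).symm ▸ LinearMap.mem_range_self (dG (j+1)) x
          exact hz }
  have hacyc : C.Acyclic := by
    intro n
    match n with
    | .ofNat i =>
      show LinearMap.ker ((dF (i+1)).dualMap) = LinearMap.range ((dF i).dualMap)
      exact (Stmt10Aux.ext_vanish_iff R M kF dF εF hεF h0F hdF i).mp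
        (hext (i+1) (Nat.succ_pos i))
    | .negSucc 0 =>
      show LinearMap.ker ((dF 0).dualMap) = LinearMap.range (εF.dualMap ∘ₗ εG)
      rw [LinearMap.range_comp_of_range_eq_top εF.dualMap (LinearMap.range_eq_top.mpr hεG)]
      exact Stmt10Aux.ker_dualMap_eq_range_dualMap (dF 0) εF hεF h0F
    | .negSucc 1 =>
      show LinearMap.ker (εF.dualMap ∘ₗ εG) = LinearMap.range (dG 0)
      have : LinearMap.ker (εF.dualMap ∘ₗ εG) = LinearMap.ker εG := by
        ext x
        simp only [LinearMap.mem_ker, LinearMap.comp_apply]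
        constructor
        · intro hx
          have := Stmt10Aux.dualMap_inj εF hεF (a₁ := εG x) (a₂ := 0)
          simp only [map_zero] at this
          exact this hx
        · intro hx; rw [hx, map_zero]
      rw [this, h0G]
    | .negSucc (j+2) =>
      show LinearMap.ker (dG j) = LinearMap.range (dG (j+1))
      exact hdG j
  have hC : C.DualAcyclic := h C hacyc
  refine ⟨hM, ⟨?_, ?_⟩, hext, ?_⟩
  · -- injectivity of eval
    have key : ∀ x : M, Module.Dual.eval R M x = 0 → x = 0 := by
      intro x hx
      obtain ⟨y, rfl⟩ := hεF x
      have hA : LinearMap.ker ((εF.dualMap ∘ₗ εG).dualMap) =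
          LinearMap.range (((dF 0).dualMap).dualMap) := hC (Int.negSucc 0)
      have h1 : (εF.dualMap ∘ₗ εG).dualMap (Module.Dual.eval R (Fin (kF 0) → R) y) = 0 := by
        refine LinearMap.ext fun g => ?_
        show (εG g) (εF y) = 0
        exact DFunLike.congr_fun hx (εG g)
      have h2 : Module.Dual.eval R (Fin (kF 0) → R) y ∈
          LinearMap.range (((dF 0).dualMap).dualMap) := hA ▸ LinearMap.mem_ker.mpr h1
      obtain ⟨z, hz⟩ := h2
      obtain ⟨w, rfl⟩ := (Module.bijective_dual_eval R (Fin (kF 1) → R)).2 z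
      have h3 : Module.Dual.eval R (Fin (kF 0) → R) (dF 0 w) =
          Module.Dual.eval R (Fin (kF 0) → R) y := by
        rw [← Stmt10Aux.eval_naturality (dF 0) w]
        exact hz
      have h4 : dF 0 w = y := (Module.bijective_dual_eval R (Fin (kF 0) → R)).1 h3
      have h5 : y ∈ LinearMap.ker εF := h0F ▸ ⟨w, h4⟩
      exact h5
    intro a b hab
    have : a - b = 0 := key (a - b) (by rw [map_sub, hab, sub_self])
    exact sub_eq_zero.mp this
  · -- surjectivity of eval
    intro w
    have hB : LinearMap.ker ((dG 0).dualMap) =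
        LinearMap.range ((εF.dualMap ∘ₗ εG).dualMap) := hC (Int.negSucc 1)
    have h1 : (dG 0).dualMap (εG.dualMap w) = 0 := by
      refine LinearMap.ext fun x => ?_
      show w (εG (dG 0 x)) = 0
      have hz : dG 0 x ∈ LinearMap.ker εG := h0G ▸ LinearMap.mem_range_self (dG 0) x
      rw [LinearMap.mem_ker] at hz
      rw [hz, map_zero]
    have h2 : εG.dualMap w ∈ LinearMap.range ((εF.dualMap ∘ₗ εG).dualMap) :=
      hB ▸ LinearMap.mem_ker.mpr h1
    obtain ⟨z, hz⟩ := h2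
    obtain ⟨y, rfl⟩ := (Module.bijective_dual_eval R (Fin (kF 0) → R)).2 z
    refine ⟨εF y, ?_⟩
    refine LinearMap.ext fun ψ => ?_
    obtain ⟨g, rfl⟩ := hεG ψ
    exact DFunLike.congr_fun hz g
  · -- Ext vanishing for the dual
    intro i hi
    obtain ⟨j, rfl⟩ := Nat.exists_eq_add_of_lt hi
    have hD : LinearMap.ker ((dG (0+j+1)).dualMap) = LinearMap.range ((dG (0+j)).dualMap) :=
      hC (Int.negSucc (0+j+2))
    exact (Stmt10Aux.ext_vanish_iff R (Module.Dual R M) kG dG εG hεG h0G hdG (0+j)).mpr hD
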